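/- Fix nonnegative integers a, b, c. Then there exists a constant C > 0 (depending only on (a,b,c)) such that for every ρ ≥ 1 and every failure-probability solution p for parameter ρ: |p(a,b,c) − binom(c,2)/ρ| ≤ C/ρ². In particular, for c ∈ {0,1} one has p(a,b,c) ≤ C/ρ², and for c ≥ 2 the failure probability equals binom(c,2)/ρ up to an error of order ρ^{−2}. -/

import Mathlib

set_option maxHeartbeats 1000000


open scoped BigOperators

/-- A function `p : ℕ³ → [0,1]` is a failure-probability solution for parameter `ρ`:
it vanishes when there are no full fragments, and satisfies the first-step
recursion of the two-locus ancestral recombination graph.  Terms whose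
coefficients contain a factor `a` (resp. `b`) vanish automatically when
`a = 0` (resp. `b = 0`) since the coefficients are `0`. -/
def IsFailureSolution (ρ : ℝ) (p : ℕ → ℕ → ℕ → ℝ) : Prop :=
  (∀ a b c, 0 ≤ p a b c ∧ p a b c ≤ 1) ∧
  (∀ a b, p a b 0 = 0) ∧
  (∀ a b c : ℕ, 1 ≤ c →
    (ρ * c / 2 + (c.choose 2 : ℝ) +
        ((a : ℝ) * b + (a : ℝ) * c + (b : ℝ) * c + (a.choose 2 : ℝ) + (b.choose 2 : ℝ)))
        * p a b c
      = ρ * c / 2 * p (a + 1) (b + 1) (c - 1)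
        + (a : ℝ) * (b : ℝ) * p (a - 1) (b - 1) (c + 1)
        + (a : ℝ) * ((a : ℝ) + 2 * (c : ℝ) - 1) / 2 * p (a - 1) b c
        + (b : ℝ) * ((b : ℝ) + 2 * (c : ℝ) - 1) / 2 * p a (b - 1) c
        + (c.choose 2 : ℝ))

noncomputable def Rr (a b c : ℕ) : ℝ :=
  (a:ℝ)*b + (a:ℝ)*c + (b:ℝ)*c + (a.choose 2 : ℝ) + (b.choose 2 : ℝ)

lemma Rr_nonneg (a b c : ℕ) : 0 ≤ Rr a b c := by
  unfold Rr; positivity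

lemma coeff_sum (a b c : ℕ) :
    (a:ℝ)*b + (a:ℝ)*((a:ℝ)+2*(c:ℝ)-1)/2 + (b:ℝ)*((b:ℝ)+2*(c:ℝ)-1)/2 = Rr a b c := by
  unfold Rr
  rw [Nat.cast_choose_two ℝ a, Nat.cast_choose_two ℝ b]
  ring

lemma coeffA_nonneg (a c : ℕ) (hc : 1 ≤ c) : 0 ≤ (a:ℝ)*((a:ℝ)+2*(c:ℝ)-1)/2 := by
  have hc' : (1:ℝ) ≤ (c:ℝ) := by exact_mod_cast hc
  have ha : (0:ℝ) ≤ (a:ℝ) := Nat.cast_nonneg a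
  nlinarith

lemma sol_le_div (c : ℕ) : ∀ a b : ℕ, ∃ M : ℝ, 0 < M ∧
    ∀ ρ : ℝ, 1 ≤ ρ → ∀ p, IsFailureSolution ρ p → p a b c ≤ M / ρ := by
  induction c with
  | zero =>
    intro a b
    refine ⟨1, one_pos, fun ρ hρ p hp => ?_⟩
    rw [hp.2.1 a b]
    have : (0:ℝ) < ρ := lt_of_lt_of_le one_pos hρ
    positivity
  | succ c ih =>
    intro a b
    obtain ⟨M, hM, hMle⟩ := ih (a+1) (b+1)
    have hRr := Rr_nonneg a b (c+1)
    have hch : (0:ℝ) ≤ (((c+1).choose 2 : ℕ) : ℝ) := Nat.cast_nonneg _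
    refine ⟨M + 2*(Rr a b (c+1) + (((c+1).choose 2 : ℕ) : ℝ)), by linarith, ?_⟩
    intro ρ hρ p hp
    have hρ0 : (0:ℝ) < ρ := lt_of_lt_of_le one_pos hρ
    obtain ⟨hbd, hzero, hrec⟩ := hp
    have hrec1 := hrec a b (c+1) (Nat.le_add_left 1 c)
    simp only [Nat.add_sub_cancel] at hrec1
    push_cast at hrec1
    have hP' : p (a+1) (b+1) c ≤ M / ρ := hMle ρ hρ p ⟨hbd, hzero, hrec⟩
    have hc0 : (0:ℝ) ≤ (c:ℝ) := Nat.cast_nonneg c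
    have hab : (0:ℝ) ≤ (a:ℝ)*(b:ℝ) := by positivity
    have hcA : (0:ℝ) ≤ (a:ℝ)*((a:ℝ)+2*((c:ℝ)+1)-1)/2 := by
      have := coeffA_nonneg a (c+1) (Nat.le_add_left 1 c); push_cast at this; linarith
    have hcB : (0:ℝ) ≤ (b:ℝ)*((b:ℝ)+2*((c:ℝ)+1)-1)/2 := by
      have := coeffA_nonneg b (c+1) (Nat.le_add_left 1 c); push_cast at this; linarith
    have hsum : (a:ℝ)*(b:ℝ) + (a:ℝ)*((a:ℝ)+2*((c:ℝ)+1)-1)/2 + (b:ℝ)*((b:ℝ)+2*((c:ℝ)+1)-1)/2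
        = Rr a b (c+1) := by
      have := coeff_sum a b (c+1); push_cast at this; linarith
    have h1 := hbd (a-1) (b-1) (c+1+1)
    have h2 := hbd (a-1) b (c+1)
    have h3 := hbd a (b-1) (c+1)
    have h0 := hbd a b (c+1)
    have hpos : (0:ℝ) < ρ*((c:ℝ)+1)/2 := by positivity
    -- LHS monotonicity: drop the nonnegative extra coefficients
    have hnn : (0:ℝ) ≤ (((c+1).choose 2 : ℕ) : ℝ) +
        ((a:ℝ)*(b:ℝ) + (a:ℝ)*((c:ℝ)+1) + (b:ℝ)*((c:ℝ)+1) + ((a.choose 2 : ℕ):ℝ) + ((b.choose 2:ℕ):ℝ)) := by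
      positivity
    have hLHS : ρ*((c:ℝ)+1)/2 * p a b (c+1)
        ≤ (ρ*((c:ℝ)+1)/2 + (((c+1).choose 2 : ℕ) : ℝ) +
          ((a:ℝ)*(b:ℝ) + (a:ℝ)*((c:ℝ)+1) + (b:ℝ)*((c:ℝ)+1) + ((a.choose 2 : ℕ):ℝ) + ((b.choose 2:ℕ):ℝ)))
          * p a b (c+1) := by
      nlinarith [mul_nonneg hnn h0.1]
    have hRHS : ρ*((c:ℝ)+1)/2 * p (a+1) (b+1) c
          + (a:ℝ)*(b:ℝ) * p (a-1) (b-1) (c+1+1)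
          + (a:ℝ)*((a:ℝ)+2*((c:ℝ)+1)-1)/2 * p (a-1) b (c+1)
          + (b:ℝ)*((b:ℝ)+2*((c:ℝ)+1)-1)/2 * p a (b-1) (c+1)
          + (((c+1).choose 2 : ℕ) : ℝ)
        ≤ ρ*((c:ℝ)+1)/2 * (M/ρ) + Rr a b (c+1) + (((c+1).choose 2 : ℕ) : ℝ) := by
      have b1 := mul_le_of_le_one_right hab h1.2
      have b2 := mul_le_of_le_one_right hcA h2.2
      have b3 := mul_le_of_le_one_right hcB h3.2
      have b0 := mul_le_mul_of_nonneg_left hP' hpos.le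
      linarith
    have hkey : ρ*((c:ℝ)+1)/2 * p a b (c+1)
        ≤ ρ*((c:ℝ)+1)/2 * (M/ρ) + Rr a b (c+1) + (((c+1).choose 2 : ℕ) : ℝ) := by
      linarith [hLHS, hrec1, hRHS]
    have hMdiv : ρ*((c:ℝ)+1)/2 * (M/ρ) = ((c:ℝ)+1)*M/2 := by field_simp
    rw [hMdiv] at hkey
    rw [le_div_iff₀ hρ0]
    rcases le_or_gt (p a b (c+1) * ρ) M with h | h
    · linarith
    · have hprod : (0:ℝ) ≤ (c:ℝ) * (p a b (c+1) * ρ - M) := mul_nonneg hc0 (by linarith)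
      nlinarith [hkey, hprod]

lemma shrink (x D E c : ℝ) (hc : 0 ≤ c) (hE : 0 ≤ E) (h : (c+1)*x = D)
    (h1 : -E ≤ D) (h2 : D ≤ E) : |x| ≤ E := by
  rw [abs_le]
  constructor
  · rcases le_total 0 x with hx | hx
    · linarith
    · nlinarith [mul_nonpos_of_nonneg_of_nonpos hc hx]
  · rcases le_total x 0 with hx | hx
    · linarith
    · nlinarith [mul_nonneg hc hx]

lemma sol_asymp (c : ℕ) : ∀ a b : ℕ, ∃ C : ℝ, 0 < C ∧
    ∀ ρ : ℝ, 1 ≤ ρ → ∀ p, IsFailureSolution ρ p →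
      |p a b c - ((c.choose 2 : ℕ) : ℝ) / ρ| ≤ C / ρ^2 := by
  induction c with
  | zero =>
    intro a b
    refine ⟨1, one_pos, fun ρ hρ p hp => ?_⟩
    have hρ0 : (0:ℝ) < ρ := lt_of_lt_of_le one_pos hρ
    rw [hp.2.1 a b]
    norm_num
    positivity
  | succ c ih =>
    intro a b
    obtain ⟨C', hC', hih⟩ := ih (a+1) (b+1)
    obtain ⟨M₁, hM₁, h₁⟩ := sol_le_div (c+1) a b
    obtain ⟨M₂, hM₂, h₂⟩ := sol_le_div (c+1+1) (a-1) (b-1)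
    obtain ⟨M₃, hM₃, h₃⟩ := sol_le_div (c+1) (a-1) b
    obtain ⟨M₄, hM₄, h₄⟩ := sol_le_div (c+1) a (b-1)
    have hRr := Rr_nonneg a b (c+1)
    have hch : (0:ℝ) ≤ (((c+1).choose 2 : ℕ) : ℝ) := Nat.cast_nonneg _
    have hK0 : (0:ℝ) ≤ (((c+1).choose 2 : ℕ) : ℝ) + Rr a b (c+1) := by linarith
    have hE0 : (0:ℝ) ≤ 2*(Rr a b (c+1) * (M₂+M₃+M₄) + ((((c+1).choose 2 : ℕ) : ℝ) + Rr a b (c+1)) * M₁) := by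
      have := mul_nonneg hRr (by linarith : (0:ℝ) ≤ M₂+M₃+M₄)
      have := mul_nonneg hK0 hM₁.le
      linarith
    refine ⟨C' + 2*(Rr a b (c+1) * (M₂+M₃+M₄) + ((((c+1).choose 2 : ℕ) : ℝ) + Rr a b (c+1)) * M₁),
      by linarith, ?_⟩
    intro ρ hρ p hp
    have hρ0 : (0:ℝ) < ρ := lt_of_lt_of_le one_pos hρ
    obtain ⟨hbd, hzero, hrec⟩ := hp
    have hrec1 := hrec a b (c+1) (Nat.le_add_left 1 c)
    simp only [Nat.add_sub_cancel] at hrec1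
    push_cast at hrec1
    have hc0 : (0:ℝ) ≤ (c:ℝ) := Nat.cast_nonneg c
    have hab : (0:ℝ) ≤ (a:ℝ)*(b:ℝ) := by positivity
    have hcA : (0:ℝ) ≤ (a:ℝ)*((a:ℝ)+2*((c:ℝ)+1)-1)/2 := by
      have := coeffA_nonneg a (c+1) (Nat.le_add_left 1 c); push_cast at this; linarith
    have hcB : (0:ℝ) ≤ (b:ℝ)*((b:ℝ)+2*((c:ℝ)+1)-1)/2 := by
      have := coeffA_nonneg b (c+1) (Nat.le_add_left 1 c); push_cast at this; linarith
    have hsum : (a:ℝ)*(b:ℝ) + (a:ℝ)*((a:ℝ)+2*((c:ℝ)+1)-1)/2 + (b:ℝ)*((b:ℝ)+2*((c:ℝ)+1)-1)/2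
        = Rr a b (c+1) := by
      have := coeff_sum a b (c+1); push_cast at this; linarith
    have hRreq : Rr a b (c+1) = (a:ℝ)*b + (a:ℝ)*((c:ℝ)+1) + (b:ℝ)*((c:ℝ)+1)
        + ((a.choose 2 : ℕ):ℝ) + ((b.choose 2 : ℕ):ℝ) := by
      unfold Rr; push_cast; ring
    -- p-value bounds multiplied by ρ
    have hρP : ρ * p a b (c+1) ≤ M₁ := by
      have := h₁ ρ hρ p ⟨hbd, hzero, hrec⟩
      rw [le_div_iff₀ hρ0] at this; linarith
    have hρq1 : ρ * p (a-1) (b-1) (c+1+1) ≤ M₂ := by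
      have := h₂ ρ hρ p ⟨hbd, hzero, hrec⟩
      rw [le_div_iff₀ hρ0] at this; linarith
    have hρq2 : ρ * p (a-1) b (c+1) ≤ M₃ := by
      have := h₃ ρ hρ p ⟨hbd, hzero, hrec⟩
      rw [le_div_iff₀ hρ0] at this; linarith
    have hρq3 : ρ * p a (b-1) (c+1) ≤ M₄ := by
      have := h₄ ρ hρ p ⟨hbd, hzero, hrec⟩
      rw [le_div_iff₀ hρ0] at this; linarith
    have hq1 := hbd (a-1) (b-1) (c+1+1)
    have hq2 := hbd (a-1) b (c+1)
    have hq3 := hbd a (b-1) (c+1)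
    have hP0 := hbd a b (c+1)
    -- abbreviations
    set P := p a b (c+1) with hP
    set P' := p (a+1) (b+1) c with hP'
    set S := (a:ℝ)*(b:ℝ) * p (a-1) (b-1) (c+1+1)
      + (a:ℝ)*((a:ℝ)+2*((c:ℝ)+1)-1)/2 * p (a-1) b (c+1)
      + (b:ℝ)*((b:ℝ)+2*((c:ℝ)+1)-1)/2 * p a (b-1) (c+1) with hS
    set K := (((c+1).choose 2 : ℕ) : ℝ) + Rr a b (c+1) with hKdef
    -- key rearranged equation
    have hkey : ρ*((c:ℝ)+1)/2 * (P - P') = (((c+1).choose 2 : ℕ) : ℝ) + S - K*P := by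
      rw [hS, hKdef, hRreq]
      linear_combination hrec1
    clear hrec1
    -- bounds on S and K*P
    have hS0 : 0 ≤ S := by
      rw [hS]
      have := mul_nonneg hab hq1.1
      have := mul_nonneg hcA hq2.1
      have := mul_nonneg hcB hq3.1
      linarith
    have hρS : ρ * S ≤ Rr a b (c+1) * (M₂+M₃+M₄) := by
      rw [hS, ← hsum]
      nlinarith [mul_le_mul_of_nonneg_left hρq1 hab, mul_le_mul_of_nonneg_left hρq2 hcA,
        mul_le_mul_of_nonneg_left hρq3 hcB,
        mul_nonneg hab (by linarith : (0:ℝ) ≤ M₃+M₄),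
        mul_nonneg hcA (by linarith : (0:ℝ) ≤ M₂+M₄),
        mul_nonneg hcB (by linarith : (0:ℝ) ≤ M₂+M₃)]
    have hKP0 : 0 ≤ K*P := mul_nonneg hK0 hP0.1
    have hρKP : ρ * (K*P) ≤ K * M₁ := by
      have heq : ρ*(K*P) = K*(ρ*P) := by ring
      rw [heq]; exact mul_le_mul_of_nonneg_left hρP hK0
    -- the telescoping identity, multiplied through
    have hch2 : 2*((((c+1)).choose 2 : ℕ) : ℝ) = ((c:ℝ)+1)*c := by
      rw [Nat.cast_choose_two ℝ (c+1)]; push_cast; ring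
    have hmain : ((c:ℝ)+1) * (ρ^2*(P-P') - ρ*(c:ℝ)) = 2*(ρ*S) - 2*(ρ*(K*P)) := by
      linear_combination 2*ρ*hkey + ρ*hch2
    have hX : |ρ^2*(P-P') - ρ*(c:ℝ)|
        ≤ 2*(Rr a b (c+1) * (M₂+M₃+M₄) + K * M₁) := by
      refine shrink _ (2*(ρ*S) - 2*(ρ*(K*P))) _ (c:ℝ) hc0 hE0 hmain ?_ ?_
      · have hn : 0 ≤ ρ*S := mul_nonneg hρ0.le hS0
        have hm : (0:ℝ) ≤ Rr a b (c+1) * (M₂+M₃+M₄) :=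
          mul_nonneg hRr (by linarith : (0:ℝ) ≤ M₂+M₃+M₄)
        linarith only [hn, hm, hρKP]
      · have hn : 0 ≤ ρ*(K*P) := mul_nonneg hρ0.le hKP0
        have hm : (0:ℝ) ≤ K * M₁ := mul_nonneg hK0 hM₁.le
        linarith only [hn, hm, hρS]
    -- induction hypothesis scaled
    have hIH := hih ρ hρ p ⟨hbd, hzero, hrec⟩
    have hIH2 : |ρ^2*P' - ρ*((c.choose 2 : ℕ):ℝ)| ≤ C' := by
      have heq : ρ^2*P' - ρ*((c.choose 2 : ℕ):ℝ) = ρ^2 * (P' - ((c.choose 2 : ℕ):ℝ)/ρ) := by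
        field_simp
      rw [heq, abs_mul, abs_of_pos (by positivity : (0:ℝ) < ρ^2)]
      calc ρ^2 * |P' - ((c.choose 2 : ℕ):ℝ)/ρ| ≤ ρ^2 * (C'/ρ^2) :=
            mul_le_mul_of_nonneg_left hIH (by positivity)
        _ = C' := by field_simp
    have hch' : ((((c+1)).choose 2 : ℕ) : ℝ) = ((c.choose 2 : ℕ):ℝ) + c := by
      rw [Nat.choose_succ_succ]; push_cast [Nat.choose_one_right]; ring
    have hfinal : |ρ^2*P - ρ*((((c+1)).choose 2 : ℕ) : ℝ)|
        ≤ C' + 2*(Rr a b (c+1) * (M₂+M₃+M₄) + K * M₁) := by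
      have hsplit : ρ^2*P - ρ*((((c+1)).choose 2 : ℕ) : ℝ)
          = (ρ^2*(P-P') - ρ*(c:ℝ)) + (ρ^2*P' - ρ*((c.choose 2 : ℕ):ℝ)) := by
        rw [hch']; ring
      rw [hsplit]
      calc |(ρ^2*(P-P') - ρ*(c:ℝ)) + (ρ^2*P' - ρ*((c.choose 2 : ℕ):ℝ))|
          ≤ |ρ^2*(P-P') - ρ*(c:ℝ)| + |ρ^2*P' - ρ*((c.choose 2 : ℕ):ℝ)| := abs_add_le _ _
        _ ≤ _ := by linarith
    have hgoal : P - ((((c+1)).choose 2 : ℕ) : ℝ)/ρ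
        = (ρ^2*P - ρ*((((c+1)).choose 2 : ℕ) : ℝ))/ρ^2 := by
      field_simp
    rw [hgoal, abs_div, abs_of_pos (by positivity : (0:ℝ) < ρ^2)]
    gcongr

/-- The failure probability equals `binom(c,2)/ρ` up to an error of order `ρ⁻²`;
in particular for `c ∈ {0,1}` it is `O(ρ⁻²)`. -/
theorem failure_probability_asymptotics (a b c : ℕ) :
    ∃ C : ℝ, 0 < C ∧ ∀ ρ : ℝ, 1 ≤ ρ → ∀ p : ℕ → ℕ → ℕ → ℝ,
      IsFailureSolution ρ p →
        |p a b c - (c.choose 2 : ℝ) / ρ| ≤ C / ρ ^ 2 ∧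
        (c ≤ 1 → p a b c ≤ C / ρ ^ 2) := by
  obtain ⟨C, hC, h⟩ := sol_asymp c a b
  refine ⟨C, hC, ?_⟩
  intro ρ hρ p hp
  have h' := h ρ hρ p hp
  refine ⟨h', ?_⟩
  intro hc1
  have hch0 : c.choose 2 = 0 := Nat.choose_eq_zero_of_lt (by omega)
  rw [hch0] at h'
  have hρ0 : (0:ℝ) < ρ := lt_of_lt_of_le one_pos hρ
  simp only [Nat.cast_zero, zero_div, sub_zero] at h'
  exact (le_abs_self _).trans h'
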